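/- arXiv:1703.09873 — 4 statements merged into one kernel-verified Lean document; each statement's English description precedes it below -/
import Mathlib

section
/- Let j be a positive integer and let G be a cubic graph with girth at least 2j+2. If C is a (2j+1)-independent set in G, then G contains an independent set of size exactly (2^{j+1} − 1)·|C|. -/
open SimpleGraph Finset

/-- A set `S` is `i`-independent in `G` if any two distinct vertices of `S`
are at distance at least `i + 1`. -/
def pIndep {V : Type*} (G : SimpleGraph V) (i : ℕ) (S : Finset V) : Prop :=
  ∀ x ∈ S, ∀ y ∈ S, x ≠ y → ((i + 1 : ℕ) : ℕ∞) ≤ G.edist x y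

set_option linter.unusedSectionVars false

section Helpers

variable {V : Type*} [Fintype V] [DecidableEq V]

/-- sphere of radius k around c -/
noncomputable def sph (G : SimpleGraph V) (c : V) (k : ℕ) : Finset V :=
  Finset.univ.filter (fun v => G.edist c v = (k : ℕ∞))

lemma mem_sph {G : SimpleGraph V} {c v : V} {k : ℕ} :
    v ∈ sph G c k ↔ G.edist c v = (k : ℕ∞) := by simp [sph]

lemma support_edist (G : SimpleGraph V) {a b w : V} (p : G.Walk a b) (hw : w ∈ p.support) :
    G.edist a w + G.edist w b ≤ (p.length : ℕ∞) := by
  have hspec := p.take_spec hw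
  calc G.edist a w + G.edist w b
      ≤ ((p.takeUntil w hw).length : ℕ∞) + ((p.dropUntil w hw).length : ℕ∞) :=
        add_le_add (SimpleGraph.edist_le _) (SimpleGraph.edist_le _)
    _ = ((((p.takeUntil w hw).append (p.dropUntil w hw)).length : ℕ)) := by
        rw [SimpleGraph.Walk.length_append]; push_cast; ring
    _ = (p.length : ℕ∞) := by rw [hspec]

lemma short_cycle_aux {G : SimpleGraph V} {j : ℕ}
    (hg : ((2 * j + 2 : ℕ) : ℕ∞) ≤ G.egirth) {u v : V} (h : G.Adj u v)
    (p : G.Walk v u) (hp : p.IsPath) (he : s(u, v) ∉ p.edges)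
    (hl : p.length ≤ 2 * j) : False := by
  have hc : (SimpleGraph.Walk.cons h p).IsCycle :=
    (SimpleGraph.Walk.cons_isCycle_iff p h).mpr ⟨hp, he⟩
  have h2 := SimpleGraph.le_egirth.mp hg _ _ hc
  rw [SimpleGraph.Walk.length_cons] at h2
  have : (2 * j + 2 : ℕ) ≤ p.length + 1 := by exact_mod_cast h2
  omega

lemma edist_one_le_of_ne {G : SimpleGraph V} {u v : V} (h : u ≠ v) :
    (1 : ℕ∞) ≤ G.edist u v :=
  Order.one_le_iff_pos.mpr (SimpleGraph.edist_pos_of_ne h)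

lemma no_same_level {G : SimpleGraph V} {j : ℕ}
    (hg : ((2 * j + 2 : ℕ) : ℕ∞) ≤ G.egirth) {c u v : V} {k : ℕ} (hk : k ≤ j)
    (hu : G.edist c u = (k : ℕ∞)) (hv : G.edist c v = (k : ℕ∞))
    (hadj : G.Adj u v) : False := by
  have hne : u ≠ v := hadj.ne
  rcases Nat.eq_zero_or_pos k with h0 | hkpos
  · subst h0
    simp only [Nat.cast_zero, SimpleGraph.edist_eq_zero_iff] at hu hv
    exact hne (hu ▸ hv ▸ rfl)
  obtain ⟨p, hp⟩ := SimpleGraph.exists_walk_of_edist_eq_coe hu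
  obtain ⟨q, hq⟩ := SimpleGraph.exists_walk_of_edist_eq_coe hv
  set w : G.Walk u v := p.reverse.append q with hw
  have hwl : w.length = 2 * k := by
    rw [hw, SimpleGraph.Walk.length_append, SimpleGraph.Walk.length_reverse, hp, hq]; omega
  set pa := w.bypass with hpa
  have hpath := w.bypass_isPath
  have hlen : pa.length ≤ 2 * k := hwl ▸ SimpleGraph.Walk.length_bypass_le w
  have hedge : s(v, u) ∉ pa.edges := by
    intro hmem
    have hmem' : s(v, u) ∈ w.edges := SimpleGraph.Walk.edges_bypass_subset w hmem
    rw [hw, SimpleGraph.Walk.edges_append, List.mem_append] at hmem'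
    rcases hmem' with h1 | h2
    · have hsup : v ∈ p.support := by
        have := p.reverse.fst_mem_support_of_mem_edges h1
        rwa [SimpleGraph.Walk.support_reverse, List.mem_reverse] at this
      have hle := support_edist G p hsup
      rw [hp, hv] at hle
      have h1le : (k : ℕ∞) + 1 ≤ (k : ℕ∞) :=
        le_trans (add_le_add_right (edist_one_le_of_ne hne.symm) _) hle
      have : (k : ℕ) + 1 ≤ k := by exact_mod_cast h1le
      omega
    · have hsup : u ∈ q.support := q.snd_mem_support_of_mem_edges h2
      have hle := support_edist G q hsup
      rw [hq, hu] at hle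
      have h1le : (k : ℕ∞) + 1 ≤ (k : ℕ∞) :=
        le_trans (add_le_add_right (edist_one_le_of_ne hne) _) hle
      have : (k : ℕ) + 1 ≤ k := by exact_mod_cast h1le
      omega
  exact short_cycle_aux hg hadj.symm pa hpath hedge (le_trans hlen (by omega))

lemma parent_exists {G : SimpleGraph V} {c v : V} {k : ℕ}
    (hv : G.edist c v = ((k + 1 : ℕ) : ℕ∞)) : ∃ u, G.Adj v u ∧ G.edist c u = (k : ℕ∞) := by
  obtain ⟨p, hp⟩ := SimpleGraph.exists_walk_of_edist_eq_coe hv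
  have hvc : v ≠ c := by
    intro h; subst h
    rw [SimpleGraph.edist_self] at hv
    have : (0 : ℕ) = k + 1 := by exact_mod_cast hv
    omega
  obtain ⟨u, hadj, q, hq⟩ := SimpleGraph.Walk.exists_eq_cons_of_ne hvc p.reverse
  have hql : q.length = k := by
    have := congrArg SimpleGraph.Walk.length hq
    rw [SimpleGraph.Walk.length_reverse, hp, SimpleGraph.Walk.length_cons] at this
    omega
  refine ⟨u, hadj, ?_⟩
  have hle : G.edist c u ≤ (k : ℕ∞) := by
    have := SimpleGraph.edist_le q
    rw [hql] at this
    rwa [SimpleGraph.edist_comm]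
  have hge : (k : ℕ∞) ≤ G.edist c u := by
    by_contra hlt
    push_neg at hlt
    have htri : G.edist c v ≤ G.edist c u + G.edist u v := SimpleGraph.edist_triangle
    have huv : G.edist u v ≤ 1 := by
      rw [SimpleGraph.edist_comm]
      exact le_of_eq (SimpleGraph.edist_eq_one_iff_adj.mpr hadj)
    lift G.edist c u to ℕ using ne_top_of_le_ne_top (ENat.coe_ne_top k) hle with m hm
    rw [hv] at htri
    have : ((k + 1 : ℕ) : ℕ∞) ≤ (m : ℕ∞) + 1 := le_trans htri (add_le_add_right huv _)
    have h1 : (k + 1 : ℕ) ≤ m + 1 := by exact_mod_cast this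
    have h2 : m < k := by exact_mod_cast hlt
    omega
  exact le_antisymm hle hge

lemma unique_parent {G : SimpleGraph V} {j : ℕ}
    (hg : ((2 * j + 2 : ℕ) : ℕ∞) ≤ G.egirth) {c v u1 u2 : V} {k : ℕ} (hk : k + 1 ≤ j)
    (hv : G.edist c v = ((k + 1 : ℕ) : ℕ∞))
    (h1 : G.Adj v u1) (h2 : G.Adj v u2)
    (hu1 : G.edist c u1 = (k : ℕ∞)) (hu2 : G.edist c u2 = (k : ℕ∞)) : u1 = u2 := by
  by_contra hne
  obtain ⟨p, hp⟩ := SimpleGraph.exists_walk_of_edist_eq_coe hu1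
  obtain ⟨q, hq⟩ := SimpleGraph.exists_walk_of_edist_eq_coe hu2
  set w : G.Walk u1 u2 := p.reverse.append q with hw
  have hwl : w.length = 2 * k := by
    rw [hw, SimpleGraph.Walk.length_append, SimpleGraph.Walk.length_reverse, hp, hq]; omega
  have hvnotsup : v ∉ w.support := by
    intro hmem
    rw [hw, SimpleGraph.Walk.mem_support_append_iff] at hmem
    rcases hmem with hm | hm
    · have hm' : v ∈ p.support := by
        rwa [SimpleGraph.Walk.support_reverse, List.mem_reverse] at hm
      have hle := support_edist G p hm'
      rw [hp, hv] at hle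
      have h1le : ((k + 1 : ℕ) : ℕ∞) ≤ (k : ℕ∞) :=
        le_trans (le_add_right le_rfl) hle
      have : (k + 1 : ℕ) ≤ k := by exact_mod_cast h1le
      omega
    · have hle := support_edist G q hm
      rw [hq, hv] at hle
      have h1le : ((k + 1 : ℕ) : ℕ∞) ≤ (k : ℕ∞) :=
        le_trans (le_add_right le_rfl) hle
      have : (k + 1 : ℕ) ≤ k := by exact_mod_cast h1le
      omega
  set W : G.Walk u1 v := w.append (SimpleGraph.Walk.cons h2.symm SimpleGraph.Walk.nil) with hW
  have hWl : W.length = 2 * k + 1 := by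
    rw [hW, SimpleGraph.Walk.length_append, hwl]; simp
  set pa := W.bypass with hpa
  have hpath := W.bypass_isPath
  have hlen : pa.length ≤ 2 * k + 1 := hWl ▸ SimpleGraph.Walk.length_bypass_le W
  have hedge : s(v, u1) ∉ pa.edges := by
    intro hmem
    have hmem' : s(v, u1) ∈ W.edges := SimpleGraph.Walk.edges_bypass_subset W hmem
    rw [hW, SimpleGraph.Walk.edges_append, List.mem_append] at hmem'
    rcases hmem' with hm | hm
    · exact hvnotsup (w.fst_mem_support_of_mem_edges hm)
    · simp only [SimpleGraph.Walk.edges_cons, SimpleGraph.Walk.edges_nil,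
        List.mem_singleton] at hm
      rw [Sym2.eq_iff] at hm
      rcases hm with ⟨hva, hvb⟩ | ⟨hva, hvb⟩
      · -- v = u2, u1 = v
        rw [hva] at hv
        rw [hv] at hu2
        have : (k + 1 : ℕ) = k := by exact_mod_cast hu2
        omega
      · exact hne hvb
  exact short_cycle_aux hg h1 pa hpath hedge (le_trans hlen (by omega))

lemma parent_fiber_card {G : SimpleGraph V} [DecidableRel G.Adj] {j : ℕ}
    (hg : ((2 * j + 2 : ℕ) : ℕ∞) ≤ G.egirth) (hreg : G.IsRegularOfDegree 3)
    {c u : V} {m : ℕ} (hm : m + 2 ≤ j) (hu : u ∈ sph G c (m + 1)) :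
    (G.neighborFinset u ∩ sph G c (m + 2)).card = 2 := by
  rw [mem_sph] at hu
  -- the parent set has exactly one element
  obtain ⟨par, hpadj, hpd⟩ := parent_exists (by exact_mod_cast hu)
  have hparent : G.neighborFinset u ∩ sph G c m = {par} := by
    ext x
    simp only [Finset.mem_inter, SimpleGraph.mem_neighborFinset, mem_sph, Finset.mem_singleton]
    constructor
    · rintro ⟨hadj, hd⟩
      exact unique_parent hg (by omega) (by exact_mod_cast hu) hadj hpadj hd hpd
    · rintro rfl
      exact ⟨hpadj, hpd⟩
  -- every neighbor is at distance m or m+2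
  have hsplit : G.neighborFinset u =
      (G.neighborFinset u ∩ sph G c m) ∪ (G.neighborFinset u ∩ sph G c (m + 2)) := by
    ext x
    simp only [Finset.mem_union, Finset.mem_inter, SimpleGraph.mem_neighborFinset, mem_sph]
    constructor
    · intro hadj
      have hxu : G.edist x u = 1 := SimpleGraph.edist_eq_one_iff_adj.mpr hadj.symm
      have hux : G.edist u x = 1 := SimpleGraph.edist_eq_one_iff_adj.mpr hadj
      have htri2 : G.edist c x ≤ G.edist c u + G.edist u x := SimpleGraph.edist_triangle
      rw [hu, hux] at htri2
      have hcast : ((m + 1 : ℕ) : ℕ∞) + 1 = ((m + 2 : ℕ) : ℕ∞) := by push_cast; ring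
      rw [hcast] at htri2
      have hnet : G.edist c x ≠ ⊤ := ne_top_of_le_ne_top (ENat.coe_ne_top (m + 2)) htri2
      have htri1 : G.edist c u ≤ G.edist c x + G.edist x u := SimpleGraph.edist_triangle
      rw [hu, hxu] at htri1
      obtain ⟨d, hd⟩ : ∃ d : ℕ, G.edist c x = (d : ℕ∞) :=
        ⟨(G.edist c x).toNat, (ENat.coe_toNat hnet).symm⟩
      rw [hd] at htri1 htri2
      have hd1 : (m + 1 : ℕ) ≤ d + 1 := by exact_mod_cast htri1
      have hd2 : (d : ℕ) ≤ m + 2 := by exact_mod_cast htri2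
      have hdne : d ≠ m + 1 := by
        intro heq
        exact no_same_level hg (by omega) hu (by rw [hd, heq]) hadj
      have : d = m ∨ d = m + 2 := by omega
      rcases this with rfl | rfl
      · exact Or.inl ⟨hadj, hd⟩
      · exact Or.inr ⟨hadj, hd⟩
    · rintro (⟨hadj, _⟩ | ⟨hadj, _⟩) <;> exact hadj
  have hdisj : Disjoint (G.neighborFinset u ∩ sph G c m)
      (G.neighborFinset u ∩ sph G c (m + 2)) := by
    rw [Finset.disjoint_left]
    rintro x h1x h2x
    rw [Finset.mem_inter, mem_sph] at h1x h2x
    have := h1x.2 ▸ h2x.2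
    have : (m : ℕ) = m + 2 := by exact_mod_cast this
    omega
  have hcard3 : (G.neighborFinset u).card = 3 := by
    rw [SimpleGraph.card_neighborFinset_eq_degree]; exact hreg u
  have := Finset.card_union_of_disjoint hdisj
  rw [← hsplit, hcard3, hparent, Finset.card_singleton] at this
  omega

lemma sph_zero (G : SimpleGraph V) (c : V) : sph G c 0 = {c} := by
  ext v
  simp only [mem_sph, Nat.cast_zero, SimpleGraph.edist_eq_zero_iff, Finset.mem_singleton]
  exact ⟨fun h => h.symm, fun h => h.symm⟩

lemma sph_one (G : SimpleGraph V) [DecidableRel G.Adj] (hreg : G.IsRegularOfDegree 3) (c : V) :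
    (sph G c 1).card = 3 := by
  have : sph G c 1 = G.neighborFinset c := by
    ext v
    simp only [mem_sph, Nat.cast_one, SimpleGraph.edist_eq_one_iff_adj,
      SimpleGraph.mem_neighborFinset]
  rw [this, SimpleGraph.card_neighborFinset_eq_degree]
  exact hreg c

lemma sph_step {G : SimpleGraph V} [DecidableRel G.Adj] {j : ℕ}
    (hg : ((2 * j + 2 : ℕ) : ℕ∞) ≤ G.egirth) (hreg : G.IsRegularOfDegree 3)
    {c : V} {m : ℕ} (hm : m + 2 ≤ j) :
    (sph G c (m + 2)).card = 2 * (sph G c (m + 1)).card := by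
  have hcov : sph G c (m + 2) =
      (sph G c (m + 1)).biUnion (fun u => G.neighborFinset u ∩ sph G c (m + 2)) := by
    ext v
    simp only [Finset.mem_biUnion, Finset.mem_inter, SimpleGraph.mem_neighborFinset, mem_sph]
    constructor
    · intro hv
      obtain ⟨u, hadj, hud⟩ := parent_exists (k := m + 1) hv
      exact ⟨u, hud, hadj.symm, hv⟩
    · rintro ⟨u, _, _, hv⟩
      exact hv
  have hdisj : ∀ u1 ∈ sph G c (m + 1), ∀ u2 ∈ sph G c (m + 1), u1 ≠ u2 →
      Disjoint (G.neighborFinset u1 ∩ sph G c (m + 2))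
        (G.neighborFinset u2 ∩ sph G c (m + 2)) := by
    intro u1 h1 u2 h2 hne
    rw [Finset.disjoint_left]
    rintro v hv1 hv2
    rw [Finset.mem_inter, SimpleGraph.mem_neighborFinset, mem_sph] at hv1 hv2
    rw [mem_sph] at h1 h2
    exact hne (unique_parent (k := m + 1) hg hm hv1.2 hv1.1.symm hv2.1.symm h1 h2)
  rw [hcov, Finset.card_biUnion hdisj]
  rw [Finset.sum_congr rfl (fun u hu => parent_fiber_card hg hreg hm hu)]
  rw [Finset.sum_const, smul_eq_mul, Nat.mul_comm]

lemma sph_card {G : SimpleGraph V} [DecidableRel G.Adj] {j : ℕ}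
    (hg : ((2 * j + 2 : ℕ) : ℕ∞) ≤ G.egirth) (hreg : G.IsRegularOfDegree 3)
    (c : V) : ∀ k : ℕ, 1 ≤ k → k ≤ j → (sph G c k).card = 3 * 2 ^ (k - 1) := by
  intro k
  induction k with
  | zero => omega
  | succ n ih =>
    intro _ hle
    rcases Nat.eq_zero_or_pos n with rfl | hn
    · simpa using sph_one G hreg c
    · obtain ⟨m, rfl⟩ : ∃ m, n = m + 1 := ⟨n - 1, by omega⟩
      have hcard := sph_step hg hreg (c := c) (m := m) (by omega)
      rw [hcard, ih (by omega) (by omega)]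
      have : m + 1 - 1 = m := by omega
      rw [this]
      have : m + 1 + 1 - 1 = m + 1 := by omega
      rw [this, pow_succ]
      ring

lemma levels_sum : ∀ j : ℕ,
    (∑ m ∈ (Finset.range (j + 1)).filter (fun m => m % 2 = j % 2),
      (if m = 0 then 1 else 3 * 2 ^ (m - 1))) = 2 ^ (j + 1) - 1 := by
  intro j
  induction j using Nat.strong_induction_on with
  | _ j ih =>
    match j, ih with
    | 0, _ => decide
    | 1, _ => decide
    | (i + 2), ih =>
      have hfil : (Finset.range (i + 3)).filter (fun m => m % 2 = (i + 2) % 2)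
          = insert (i + 2) ((Finset.range (i + 1)).filter (fun m => m % 2 = i % 2)) := by
        ext m
        simp only [Finset.mem_insert, Finset.mem_filter, Finset.mem_range]
        omega
      rw [hfil, Finset.sum_insert (by simp only [Finset.mem_filter, Finset.mem_range]; omega)]
      rw [ih i (by omega)]
      have h1 : (1 : ℕ) ≤ 2 ^ (i + 1) := Nat.one_le_two_pow
      have h2 : (2 : ℕ) ^ (i + 2 + 1) = 2 ^ (i + 1) * 4 := by ring
      have h3 : i + 2 - 1 = i + 1 := by omega
      rw [if_neg (by omega), h3, h2]
      omega


end Helpers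

theorem stmt2 {V : Type*} [Fintype V] [DecidableEq V] (G : SimpleGraph V)
    [DecidableRel G.Adj] (hreg : G.IsRegularOfDegree 3)
    (j : ℕ) (hj : 0 < j) (hg : ((2 * j + 2 : ℕ) : ℕ∞) ≤ G.egirth)
    (C : Finset V) (hC : pIndep G (2 * j + 1) C) :
    ∃ I : Finset V, (∀ x ∈ I, ∀ y ∈ I, ¬ G.Adj x y) ∧
      I.card = (2 ^ (j + 1) - 1) * C.card := by
  classical
  set L : Finset ℕ := (Finset.range (j + 1)).filter (fun m => m % 2 = j % 2) with hL
  set Ic : V → Finset V := fun c => L.biUnion (fun m => sph G c m) with hIc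
  have memIc : ∀ c v, v ∈ Ic c ↔ ∃ m ∈ L, G.edist c v = (m : ℕ∞) := by
    intro c v
    simp only [hIc, Finset.mem_biUnion, mem_sph]
  have hLle : ∀ m ∈ L, m ≤ j := by
    intro m hm
    rw [hL, Finset.mem_filter, Finset.mem_range] at hm
    omega
  -- distance bound for members of Ic
  have hball : ∀ c v, v ∈ Ic c → G.edist c v ≤ (j : ℕ∞) := by
    intro c v hv
    obtain ⟨m, hm, hd⟩ := (memIc c v).mp hv
    rw [hd]
    exact_mod_cast hLle m hm
  -- cardinality of each Ic
  have hIcCard : ∀ c, (Ic c).card = 2 ^ (j + 1) - 1 := by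
    intro c
    rw [hIc]
    rw [Finset.card_biUnion]
    · rw [← levels_sum j, hL]
      apply Finset.sum_congr rfl
      intro m hm
      have hmj := hLle m (hL ▸ hm)
      rcases Nat.eq_zero_or_pos m with rfl | hmpos
      · simp [sph_zero]
      · rw [if_neg (by omega)]
        exact sph_card hg hreg c m hmpos hmj
    · intro m1 h1 m2 h2 hne
      rw [Function.onFun, Finset.disjoint_left]
      intro v hv1 hv2
      rw [mem_sph] at hv1 hv2
      exact hne (by exact_mod_cast hv1 ▸ hv2)
  refine ⟨C.biUnion Ic, ?_, ?_⟩
  · -- independence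
    intro x hx y hy hadj
    rw [Finset.mem_biUnion] at hx hy
    obtain ⟨c, hcC, hxc⟩ := hx
    obtain ⟨c', hc'C, hyc⟩ := hy
    have hxy1 : G.edist x y = 1 := SimpleGraph.edist_eq_one_iff_adj.mpr hadj
    by_cases hcc : c = c'
    · subst hcc
      obtain ⟨m, hm, hdx⟩ := (memIc c x).mp hxc
      obtain ⟨m', hm', hdy⟩ := (memIc c y).mp hyc
      -- m and m' differ by at most 1 but have the same parity, so equal
      have ht1 : G.edist c y ≤ G.edist c x + G.edist x y := SimpleGraph.edist_triangle
      have ht2 : G.edist c x ≤ G.edist c y + G.edist y x := SimpleGraph.edist_triangle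
      rw [hdx, hdy, hxy1] at ht1
      rw [hdx, hdy, SimpleGraph.edist_comm, hxy1] at ht2
      have hm1 : m' ≤ m + 1 := by
        have : ((m' : ℕ) : ℕ∞) ≤ ((m + 1 : ℕ) : ℕ∞) := by push_cast; exact_mod_cast ht1
        exact_mod_cast this
      have hm2 : m ≤ m' + 1 := by
        have : ((m : ℕ) : ℕ∞) ≤ ((m' + 1 : ℕ) : ℕ∞) := by push_cast; exact_mod_cast ht2
        exact_mod_cast this
      have hpar : m % 2 = m' % 2 := by
        rw [hL, Finset.mem_filter] at hm hm'
        omega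
      have hmm : m = m' := by omega
      subst hmm
      exact no_same_level hg (hLle m hm) hdx hdy hadj
    · -- different centers: contradicts (2j+1)-independence
      have h1 := hball c x hxc
      have h2 := hball c' y hyc
      have ht : G.edist c c' ≤ G.edist c x + G.edist x y + G.edist y c' := by
        calc G.edist c c' ≤ G.edist c x + G.edist x c' := SimpleGraph.edist_triangle
          _ ≤ G.edist c x + (G.edist x y + G.edist y c') :=
            add_le_add_right SimpleGraph.edist_triangle _
          _ = G.edist c x + G.edist x y + G.edist y c' := by ring
      rw [hxy1] at ht
      rw [SimpleGraph.edist_comm] at h2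
      have hup : G.edist c c' ≤ ((2 * j + 1 : ℕ) : ℕ∞) := by
        calc G.edist c c' ≤ G.edist c x + 1 + G.edist y c' := ht
          _ ≤ (j : ℕ∞) + 1 + (j : ℕ∞) := by
              exact add_le_add (add_le_add h1 le_rfl) h2
          _ = ((2 * j + 1 : ℕ) : ℕ∞) := by push_cast; ring
      have hlow := hC c hcC c' hc'C hcc
      have : ((2 * j + 1 : ℕ) + 1 : ℕ∞) ≤ ((2 * j + 1 : ℕ) : ℕ∞) := le_trans (by exact_mod_cast hlow) hup
      have hcontr : (2 * j + 1 : ℕ) + 1 ≤ 2 * j + 1 := by exact_mod_cast this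
      omega
  · -- cardinality
    rw [Finset.card_biUnion]
    · rw [Finset.sum_congr rfl (fun c _ => hIcCard c), Finset.sum_const, smul_eq_mul,
        Nat.mul_comm]
    · intro c1 h1 c2 h2 hne
      rw [Function.onFun, Finset.disjoint_left]
      intro v hv1 hv2
      have hd1 := hball c1 v hv1
      have hd2 := hball c2 v hv2
      have ht : G.edist c1 c2 ≤ G.edist c1 v + G.edist v c2 := SimpleGraph.edist_triangle
      rw [SimpleGraph.edist_comm] at hd2
      have hup : G.edist c1 c2 ≤ ((2 * j : ℕ) : ℕ∞) := by
        calc G.edist c1 c2 ≤ (j : ℕ∞) + (j : ℕ∞) := le_trans ht (add_le_add hd1 hd2)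
          _ = ((2 * j : ℕ) : ℕ∞) := by push_cast; ring
      have hlow := hC c1 h1 c2 h2 hne
      have : ((2 * j + 1 : ℕ) + 1 : ℕ∞) ≤ ((2 * j : ℕ) : ℕ∞) := le_trans (by exact_mod_cast hlow) hup
      have hcontr : (2 * j + 1 : ℕ) + 1 ≤ 2 * j := by exact_mod_cast this
      omega
end

section
/- Let G be a cubic graph on n vertices, and let C1 and C2 be disjoint vertex sets with C1 independent and C2 2-independent. Let Q be the set of vertices in C1 with no neighbor in C2, let ℓ be the number of edges of G with both endpoints outside C1 ∪ C2, and let s = |C1| + |C2|. Then 3(n − s) − 2ℓ = 3s − 2(|C1| − |Q|). -/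
open SimpleGraph Finset

section Aux

variable {V : Type*} [Fintype V] [DecidableEq V] (G : SimpleGraph V) [DecidableRel G.Adj]

/-- Darts with tail in `A` are counted by the sum of degrees over `A`. -/
lemma aux_sum_deg (A : Finset V) :
    ((univ : Finset G.Dart).filter fun d => d.fst ∈ A).card = ∑ v ∈ A, G.degree v := by
  rw [Finset.card_eq_sum_card_fiberwise
    (f := fun d : G.Dart => d.fst) (s := (univ : Finset G.Dart).filter fun d => d.fst ∈ A)
    (t := A) (fun d hd => (mem_filter.mp (Finset.mem_coe.mp hd)).2)]
  refine Finset.sum_congr rfl fun v hv => ?_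
  rw [← G.dart_fst_fiber_card_eq_degree]
  congr 1
  ext d
  simp only [mem_filter, mem_univ, true_and]
  exact ⟨fun h => h.2, fun h => ⟨h ▸ hv, h⟩⟩

/-- Darts with both ends in `A` are twice the edges inside `A`. -/
lemma aux_both (A : Finset V) :
    ((univ : Finset G.Dart).filter fun d => d.fst ∈ A ∧ d.snd ∈ A).card
      = 2 * (G.edgeFinset.filter fun e => ∀ v ∈ e, v ∈ A).card := by
  have hmem : ∀ d : G.Dart, (d.fst ∈ A ∧ d.snd ∈ A) ↔ (∀ v ∈ d.edge, v ∈ A) := by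
    intro d
    constructor
    · intro h v hv
      rcases Sym2.mem_iff.mp hv with rfl | rfl
      · exact h.1
      · exact h.2
    · intro h
      exact ⟨h _ (Sym2.mem_mk_left _ _), h _ (Sym2.mem_mk_right _ _)⟩
  rw [Finset.card_eq_sum_card_fiberwise
    (f := fun d : G.Dart => d.edge)
    (t := G.edgeFinset.filter fun e => ∀ v ∈ e, v ∈ A)
    (fun d hd => by
      rw [Finset.mem_coe, mem_filter] at hd ⊢
      exact ⟨mem_edgeFinset.mpr d.edge_mem, (hmem d).mp hd.2⟩)]
  rw [Finset.sum_congr rfl (fun e he => ?_), Finset.sum_const, smul_eq_mul, mul_comm]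
  rw [mem_filter, mem_edgeFinset] at he
  rw [← G.dart_edge_fiber_card e he.1]
  congr 1
  ext d
  simp only [mem_filter, mem_univ, true_and]
  constructor
  · exact fun h => h.2
  · intro h
    refine ⟨(hmem d).mpr ?_, h⟩
    rw [h]
    exact he.2

/-- Swapping darts. -/
lemma aux_swap (P Q : V → Prop) [DecidablePred P] [DecidablePred Q] :
    ((univ : Finset G.Dart).filter fun d => P d.fst ∧ Q d.snd).card
      = ((univ : Finset G.Dart).filter fun d => Q d.fst ∧ P d.snd).card := by
  refine Finset.card_bij (fun d _ => d.symm) ?_ ?_ ?_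
  · intro d hd
    rw [mem_filter] at hd ⊢
    exact ⟨mem_univ _, hd.2.2, hd.2.1⟩
  · intro d₁ h₁ d₂ h₂ h
    have := congrArg SimpleGraph.Dart.symm h
    rwa [Dart.symm_symm, Dart.symm_symm] at this
  · intro d hd
    rw [mem_filter] at hd
    exact ⟨d.symm, mem_filter.mpr ⟨mem_univ _, hd.2.2, hd.2.1⟩, d.symm_symm⟩

lemma aux_split (p q : G.Dart → Prop) [DecidablePred p] [DecidablePred q] :
    ((univ : Finset G.Dart).filter p).card
      = ((univ : Finset G.Dart).filter fun d => p d ∧ q d).card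
        + ((univ : Finset G.Dart).filter fun d => p d ∧ ¬ q d).card := by
  rw [← Finset.filter_filter, ← Finset.filter_filter,
    Finset.card_filter_add_card_filter_not]

end Aux

open Classical in
theorem stmt5 {V : Type*} [Fintype V] [DecidableEq V] (G : SimpleGraph V)
    [DecidableRel G.Adj] (hreg : G.IsRegularOfDegree 3)
    (C1 C2 : Finset V) (hdisj : Disjoint C1 C2)
    (hC1 : pIndep G 1 C1) (hC2 : pIndep G 2 C2) :
    (3 : ℤ) * ((Fintype.card V : ℤ) - (C1.card + C2.card))
      - 2 * (G.edgeFinset.filter (fun e => ∀ v ∈ e, v ∉ C1 ∪ C2)).card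
    = 3 * (C1.card + C2.card)
      - 2 * ((C1.card : ℤ) - (C1.filter (fun v => ∀ u ∈ C2, ¬ G.Adj v u)).card) := by
  set S : Finset V := C1 ∪ C2 with hS
  -- no edges inside C1
  have noedge1 : ∀ x ∈ C1, ∀ y ∈ C1, ¬ G.Adj x y := by
    intro x hx y hy hadj
    have h1 : G.edist x y = 1 := edist_eq_one_iff_adj.mpr hadj
    have h2 := hC1 x hx y hy hadj.ne
    rw [h1] at h2
    norm_num at h2
  -- no edges inside C2
  have noedge2 : ∀ x ∈ C2, ∀ y ∈ C2, ¬ G.Adj x y := by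
    intro x hx y hy hadj
    have h1 : G.edist x y = 1 := edist_eq_one_iff_adj.mpr hadj
    have h2 := hC2 x hx y hy hadj.ne
    rw [h1] at h2
    norm_num at h2
  -- a vertex has at most one neighbor in C2
  have c2close : ∀ v : V, ∀ u₁ ∈ C2, ∀ u₂ ∈ C2, G.Adj v u₁ → G.Adj v u₂ → u₁ = u₂ := by
    intro v u₁ h₁ u₂ h₂ ha₁ ha₂
    by_contra hne
    have h3 := hC2 u₁ h₁ u₂ h₂ hne
    have ht : G.edist u₁ u₂ ≤ G.edist u₁ v + G.edist v u₂ := SimpleGraph.edist_triangle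
    rw [edist_eq_one_iff_adj.mpr ha₁.symm, edist_eq_one_iff_adj.mpr ha₂] at ht
    have : ((2 + 1 : ℕ) : ℕ∞) ≤ 1 + 1 := le_trans h3 ht
    norm_num at this
  -- notation for counts
  set a : ℕ := (G.edgeFinset.filter fun e => ∀ v ∈ e, v ∈ S).card with ha_def
  set l : ℕ := (G.edgeFinset.filter fun e => ∀ v ∈ e, v ∉ S).card with hl_def
  set X : ℕ := ((univ : Finset G.Dart).filter fun d => d.fst ∈ S ∧ d.snd ∉ S).card with hX_def
  set Y : ℕ := ((univ : Finset G.Dart).filter fun d => d.fst ∉ S ∧ d.snd ∈ S).card with hY_def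
  set c : ℕ := (C1.filter fun v => ∃ u ∈ C2, G.Adj v u).card with hc_def
  set q : ℕ := (C1.filter fun v => ∀ u ∈ C2, ¬ G.Adj v u).card with hq_def
  -- total darts
  have htot : ((univ : Finset G.Dart).filter fun d => d.fst ∈ S).card
      + ((univ : Finset G.Dart).filter fun d => ¬ d.fst ∈ S).card
      = 3 * Fintype.card V := by
    rw [Finset.card_filter_add_card_filter_not, Finset.card_univ,
      G.dart_card_eq_sum_degrees]
    simp [hreg _, Finset.sum_const, mul_comm]
  -- the S side
  have hSdeg : ((univ : Finset G.Dart).filter fun d => d.fst ∈ S).card = 3 * S.card := by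
    rw [aux_sum_deg]
    simp [hreg _, Finset.sum_const, mul_comm]
  have hSsplit : ((univ : Finset G.Dart).filter fun d => d.fst ∈ S).card
      = 2 * a + X := by
    rw [aux_split G (fun d => d.fst ∈ S) (fun d => d.snd ∈ S), aux_both]
  -- the complement side
  have hCdeg : ((univ : Finset G.Dart).filter fun d => ¬ d.fst ∈ S).card
      = 2 * l + Y := by
    rw [aux_split G (fun d => ¬ d.fst ∈ S) (fun d => ¬ d.snd ∈ S)]
    have e1 : ((univ : Finset G.Dart).filter fun d => ¬ d.fst ∈ S ∧ ¬ d.snd ∈ S).card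
        = ((univ : Finset G.Dart).filter fun d => d.fst ∈ univ \ S ∧ d.snd ∈ univ \ S).card := by
      congr 1; ext d; simp
    have e2 : (G.edgeFinset.filter fun e => ∀ v ∈ e, v ∈ univ \ S).card = l := by
      rw [hl_def]; congr 1; ext e; simp
    have e3 : ((univ : Finset G.Dart).filter fun d => ¬ d.fst ∈ S ∧ ¬ ¬ d.snd ∈ S).card = Y := by
      rw [hY_def]; congr 1; ext d; simp
    rw [e1, aux_both, e2, e3]
  have hXY : X = Y := by
    rw [hX_def, hY_def]
    exact aux_swap G (fun v => v ∈ S) (fun v => ¬ v ∈ S)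
  -- edges inside S: 2 * a = 2 * c
  have hac : 2 * a = 2 * c := by
    rw [← aux_both]
    have hsetsplit : ((univ : Finset G.Dart).filter fun d => d.fst ∈ S ∧ d.snd ∈ S)
        = ((univ : Finset G.Dart).filter fun d => d.fst ∈ C1 ∧ d.snd ∈ C2)
          ∪ ((univ : Finset G.Dart).filter fun d => d.fst ∈ C2 ∧ d.snd ∈ C1) := by
      ext d
      simp only [mem_filter, mem_univ, true_and, Finset.mem_union, hS]
      constructor
      · rintro ⟨h1 | h1, h2 | h2⟩
        · exact absurd d.adj (noedge1 _ h1 _ h2)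
        · exact Or.inl ⟨h1, h2⟩
        · exact Or.inr ⟨h1, h2⟩
        · exact absurd d.adj (noedge2 _ h1 _ h2)
      · rintro (⟨h1, h2⟩ | ⟨h1, h2⟩)
        · exact ⟨Or.inl h1, Or.inr h2⟩
        · exact ⟨Or.inr h1, Or.inl h2⟩
    have hdisjd : Disjoint
        ((univ : Finset G.Dart).filter fun d => d.fst ∈ C1 ∧ d.snd ∈ C2)
        ((univ : Finset G.Dart).filter fun d => d.fst ∈ C2 ∧ d.snd ∈ C1) := by
      rw [Finset.disjoint_left]
      intro d h1 h2
      rw [mem_filter] at h1 h2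
      exact (Finset.disjoint_left.mp hdisj) h1.2.1 h2.2.1
    have hswap : ((univ : Finset G.Dart).filter fun d => d.fst ∈ C2 ∧ d.snd ∈ C1).card
        = ((univ : Finset G.Dart).filter fun d => d.fst ∈ C1 ∧ d.snd ∈ C2).card :=
      aux_swap G (fun v => v ∈ C2) (fun v => v ∈ C1)
    have hbij : ((univ : Finset G.Dart).filter fun d => d.fst ∈ C1 ∧ d.snd ∈ C2).card = c := by
      rw [hc_def]
      refine Finset.card_bij (fun d _ => d.fst) ?_ ?_ ?_
      · intro d hd
        rw [mem_filter] at hd ⊢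
        exact ⟨hd.2.1, d.snd, hd.2.2, d.adj⟩
      · intro d₁ h₁ d₂ h₂ h
        rw [mem_filter] at h₁ h₂
        have h' : d₁.fst = d₂.fst := h
        have hs : d₁.snd = d₂.snd := by
          apply c2close d₁.fst d₁.snd h₁.2.2 d₂.snd h₂.2.2 d₁.adj
          rw [h']; exact d₂.adj
        exact Dart.ext _ _ (Prod.ext h' hs)
      · intro v hv
        rw [mem_filter] at hv
        obtain ⟨hv1, u, hu, hadj⟩ := hv
        exact ⟨Dart.mk (v, u) hadj, mem_filter.mpr ⟨mem_univ _, hv1, hu⟩, rfl⟩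
    rw [hsetsplit, Finset.card_union_of_disjoint hdisjd, hswap, hbij]
    ring
  -- c + q = |C1|
  have hcq : c + q = C1.card := by
    rw [hc_def, hq_def]
    have := Finset.card_filter_add_card_filter_not
      (s := C1) (p := fun v => ∀ u ∈ C2, ¬ G.Adj v u)
    rw [← this]
    have : (C1.filter fun v => ∃ u ∈ C2, G.Adj v u)
        = (C1.filter fun v => ¬ ∀ u ∈ C2, ¬ G.Adj v u) := by
      congr 1; ext v; push_neg; rfl
    rw [this]; ring
  have hScard : S.card = C1.card + C2.card := Finset.card_union_of_disjoint hdisj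
  -- assemble
  rw [hSdeg, hCdeg] at htot
  rw [hSdeg] at hSsplit
  omega
end

section
/- Let G be a cubic graph on n vertices, and let C1 and C2 be disjoint vertex sets with C1 independent and C2 2-independent. If |C1| < 0.456n, then |C1| + |C2| < 0.652n. -/
open SimpleGraph Finset

lemma nbr_card_eq_sum {V : Type*} [Fintype V] [DecidableEq V] (G : SimpleGraph V)
    [DecidableRel G.Adj] (v : V) (B : Finset V) :
    (G.neighborFinset v ∩ B).card = ∑ u ∈ B, if G.Adj v u then 1 else 0 := by
  rw [Finset.inter_comm, ← Finset.filter_mem_eq_inter, Finset.card_filter]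
  simp [mem_neighborFinset, adj_comm]

lemma swap_sum {V : Type*} [Fintype V] [DecidableEq V] (G : SimpleGraph V)
    [DecidableRel G.Adj] (A B : Finset V) :
    ∑ v ∈ A, (G.neighborFinset v ∩ B).card = ∑ u ∈ B, (G.neighborFinset u ∩ A).card := by
  simp only [nbr_card_eq_sum]
  rw [Finset.sum_comm]
  congr 1; ext u; congr 1; ext v; simp [adj_comm]

lemma univ_sum_nbr {V : Type*} [Fintype V] [DecidableEq V] (G : SimpleGraph V)
    [DecidableRel G.Adj] (hreg : G.IsRegularOfDegree 3) (B : Finset V) :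
    ∑ v ∈ Finset.univ, (G.neighborFinset v ∩ B).card = 3 * B.card := by
  rw [swap_sum]
  have : ∀ u ∈ B, (G.neighborFinset u ∩ Finset.univ).card = 3 := by
    intro u _
    rw [Finset.inter_univ]
    exact hreg u
  calc ∑ u ∈ B, (G.neighborFinset u ∩ Finset.univ).card = ∑ u ∈ B, 3 :=
        Finset.sum_congr rfl this
    _ = 3 * B.card := by rw [Finset.sum_const, smul_eq_mul, mul_comm]

theorem stmt6 {V : Type*} [Fintype V] [DecidableEq V] (G : SimpleGraph V)
    [DecidableRel G.Adj] (hreg : G.IsRegularOfDegree 3)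
    (C1 C2 : Finset V) (hdisj : Disjoint C1 C2)
    (hC1 : pIndep G 1 C1) (hC2 : pIndep G 2 C2)
    (hsmall : (C1.card : ℝ) < 0.456 * Fintype.card V) :
    (C1.card : ℝ) + C2.card < 0.652 * Fintype.card V := by
  classical
  set n := Fintype.card V
  -- every vertex has at most one neighbor in C2
  have hone : ∀ v : V, (G.neighborFinset v ∩ C2).card ≤ 1 := by
    intro v
    apply Finset.card_le_one.2
    intro u hu w hw
    by_contra hne
    simp only [Finset.mem_inter, mem_neighborFinset] at hu hw
    have h3 : ((2 + 1 : ℕ) : ℕ∞) ≤ G.edist u w := hC2 u hu.2 w hw.2 hne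
    have e1 : G.edist u v = 1 := by
      rw [edist_eq_one_iff_adj]; exact hu.1.symm
    have e2 : G.edist v w = 1 := by
      rw [edist_eq_one_iff_adj]; exact hw.1
    have htri : G.edist u w ≤ 2 := by
      calc G.edist u w ≤ G.edist u v + G.edist v w := SimpleGraph.edist_triangle
        _ = 2 := by rw [e1, e2]; rfl
    have : ((3 : ℕ) : ℕ∞) ≤ 2 := le_trans (by exact_mod_cast h3) htri
    norm_num at this
  -- vertices of C1 have no neighbor in C1
  have hempty : ∀ v ∈ C1, G.neighborFinset v ∩ C1 = ∅ := by
    intro v hv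
    rw [Finset.eq_empty_iff_forall_notMem]
    intro u hu
    simp only [Finset.mem_inter, mem_neighborFinset] at hu
    have hne : v ≠ u := G.ne_of_adj hu.1
    have h2 : ((1 + 1 : ℕ) : ℕ∞) ≤ G.edist v u := hC1 v hv u hu.2 hne
    have e1 : G.edist v u = 1 := by rw [edist_eq_one_iff_adj]; exact hu.1
    rw [e1] at h2
    norm_num at h2
  -- pointwise bound by degree
  have hdeg : ∀ v : V, (G.neighborFinset v ∩ C1).card + (G.neighborFinset v ∩ C2).card ≤ 3 := by
    intro v
    have hd : Disjoint (G.neighborFinset v ∩ C1) (G.neighborFinset v ∩ C2) :=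
      Finset.disjoint_of_subset_left Finset.inter_subset_right
        (Finset.disjoint_of_subset_right Finset.inter_subset_right hdisj)
    calc (G.neighborFinset v ∩ C1).card + (G.neighborFinset v ∩ C2).card
        = ((G.neighborFinset v ∩ C1) ∪ (G.neighborFinset v ∩ C2)).card :=
          (Finset.card_union_of_disjoint hd).symm
      _ ≤ (G.neighborFinset v).card := Finset.card_le_card (by
          apply Finset.union_subset <;> exact Finset.inter_subset_left)
      _ = 3 := hreg v
  set f : V → ℕ := fun v => (G.neighborFinset v ∩ C1).card + (G.neighborFinset v ∩ C2).card
    with hf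
  have htot : ∑ v ∈ Finset.univ, f v = 3 * C1.card + 3 * C2.card := by
    rw [hf, Finset.sum_add_distrib, univ_sum_nbr G hreg, univ_sum_nbr G hreg]
  have hU : C1 ∪ C2 ⊆ (Finset.univ : Finset V) := Finset.subset_univ _
  have hsplit : ∑ v ∈ Finset.univ \ (C1 ∪ C2), f v + ∑ v ∈ C1 ∪ C2, f v
      = ∑ v ∈ Finset.univ, f v := Finset.sum_sdiff hU
  have hsum1 : ∑ v ∈ C1, f v ≤ C1.card := by
    calc ∑ v ∈ C1, f v = ∑ v ∈ C1, (G.neighborFinset v ∩ C2).card := by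
          apply Finset.sum_congr rfl
          intro v hv
          rw [hf]
          simp [hempty v hv]
      _ ≤ ∑ v ∈ C1, 1 := Finset.sum_le_sum (fun v _ => hone v)
      _ = C1.card := by simp
  have hsum2 : ∑ v ∈ C2, f v ≤ C1.card := by
    have hC2e : ∀ v ∈ C2, G.neighborFinset v ∩ C2 = ∅ := by
      intro v hv
      rw [Finset.eq_empty_iff_forall_notMem]
      intro u hu
      simp only [Finset.mem_inter, mem_neighborFinset] at hu
      have hne : v ≠ u := G.ne_of_adj hu.1
      have h3 : ((2 + 1 : ℕ) : ℕ∞) ≤ G.edist v u := hC2 v hv u hu.2 hne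
      have e1 : G.edist v u = 1 := by rw [edist_eq_one_iff_adj]; exact hu.1
      rw [e1] at h3
      norm_num at h3
    calc ∑ v ∈ C2, f v = ∑ v ∈ C2, (G.neighborFinset v ∩ C1).card := by
          apply Finset.sum_congr rfl
          intro v hv
          rw [hf]
          simp [hC2e v hv]
      _ = ∑ u ∈ C1, (G.neighborFinset u ∩ C2).card := swap_sum G C2 C1
      _ ≤ ∑ u ∈ C1, 1 := Finset.sum_le_sum (fun v _ => hone v)
      _ = C1.card := by simp
  have hsumU : ∑ v ∈ C1 ∪ C2, f v ≤ 2 * C1.card := by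
    rw [Finset.sum_union hdisj]
    omega
  have hsumR : ∑ v ∈ Finset.univ \ (C1 ∪ C2), f v ≤ 3 * (Finset.univ \ (C1 ∪ C2)).card := by
    calc ∑ v ∈ Finset.univ \ (C1 ∪ C2), f v ≤ ∑ v ∈ Finset.univ \ (C1 ∪ C2), 3 :=
          Finset.sum_le_sum (fun v _ => hdeg v)
      _ = 3 * (Finset.univ \ (C1 ∪ C2)).card := by rw [Finset.sum_const]; ring
  have hRcard : (Finset.univ \ (C1 ∪ C2)).card + (C1 ∪ C2).card = n := by
    rw [Finset.card_sdiff_add_card_eq_card hU, Finset.card_univ]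
  have hUcard : (C1 ∪ C2).card = C1.card + C2.card := Finset.card_union_of_disjoint hdisj
  -- key inequality: 4|C1| + 6|C2| ≤ 3n
  have key : 4 * C1.card + 6 * C2.card ≤ 3 * n := by omega
  have hc1 := hsmall
  have hn : (0:ℝ) ≤ (n:ℝ) := by positivity
  have keyR : 4 * (C1.card : ℝ) + 6 * (C2.card : ℝ) ≤ 3 * (n : ℝ) := by
    exact_mod_cast key
  push_cast at keyR ⊢
  linarith
end

section
/- Let G be a cubic graph on n vertices with girth at least 9. Let C1, C2, C4 be pairwise disjoint sets with C_i i-independent for i ∈ {1,2,4}, let Q be the set of vertices of C1 without a neighbor in C2, q = |Q|, and ℓ the number of edges with both endpoints outside C1 ∪ C2. Then 3|C4| ≤ ℓ + q + |C2|. -/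
open SimpleGraph Finset

lemma no_tri {V : Type*} (G : SimpleGraph V) (hg : (9 : ℕ∞) ≤ G.egirth)
    {a b c : V} (hab : G.Adj a b) (hbc : G.Adj b c) (hca : G.Adj c a) : False := by
  have hac : a ≠ c := fun h => by subst h; exact G.irrefl hca
  have hc : (Walk.cons hab (Walk.cons hbc (Walk.cons hca Walk.nil))).IsCycle := by
    simp [Walk.isCycle_def, Walk.isTrail_def, hab.ne, hbc.ne, hca.ne, hac,
      Sym2.eq, Sym2.rel_iff', hab.ne', hbc.ne', hca.ne', hac.symm]
  have := le_egirth.mp hg _ _ hc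
  simp at this
  exact absurd this (by norm_num)

lemma no_sq {V : Type*} (G : SimpleGraph V) (hg : (9 : ℕ∞) ≤ G.egirth)
    {a b c d : V} (hab : G.Adj a b) (hbc : G.Adj b c) (hcd : G.Adj c d) (hda : G.Adj d a)
    (hac : a ≠ c) (hbd : b ≠ d) : False := by
  have hc : (Walk.cons hab (Walk.cons hbc (Walk.cons hcd (Walk.cons hda Walk.nil)))).IsCycle := by
    simp [Walk.isCycle_def, Walk.isTrail_def, hab.ne, hbc.ne, hcd.ne, hda.ne, hac, hbd,
      Sym2.eq, Sym2.rel_iff', hab.ne', hbc.ne', hcd.ne', hda.ne', hac.symm, hbd.symm]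
  have := le_egirth.mp hg _ _ hc
  simp at this
  exact absurd this (by norm_num)

open Classical in
noncomputable def Fmap {V : Type*} (G : SimpleGraph V) (C1 C2 : Finset V) (p : V × V) :
    Sym2 V ⊕ V :=
  if p.2 ∈ C2 then .inr p.2
  else if p.2 ∈ C1 then
    if h : ∃ w ∈ C2, G.Adj p.2 w then .inr h.choose else .inr p.2
  else .inl s(p.1, p.2)

open Classical in
theorem stmt15 {V : Type*} [Fintype V] [DecidableEq V] (G : SimpleGraph V)
    [DecidableRel G.Adj] (hreg : G.IsRegularOfDegree 3)
    (hg : (9 : ℕ∞) ≤ G.egirth)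
    (C1 C2 C4 : Finset V)
    (h12 : Disjoint C1 C2) (h14 : Disjoint C1 C4) (h24 : Disjoint C2 C4)
    (hC1 : pIndep G 1 C1) (hC2 : pIndep G 2 C2) (hC4 : pIndep G 4 C4) :
    3 * C4.card ≤
      (G.edgeFinset.filter (fun e => ∀ v ∈ e, v ∉ C1 ∪ C2)).card
      + (C1.filter (fun v => ∀ u ∈ C2, ¬ G.Adj v u)).card
      + C2.card := by
  classical
  set L := G.edgeFinset.filter (fun e => ∀ v ∈ e, v ∉ C1 ∪ C2) with hLdef
  set Qf := C1.filter (fun v => ∀ u ∈ C2, ¬ G.Adj v u) with hQdef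
  set P : Finset (V × V) := C4.biUnion (fun v => (G.neighborFinset v).image fun u => (v, u))
    with hPdef
  have hPmem : ∀ p : V × V, p ∈ P → p.1 ∈ C4 ∧ G.Adj p.1 p.2 := by
    rintro ⟨v, u⟩ hp
    simp only [hPdef, mem_biUnion, mem_image, mem_neighborFinset] at hp
    obtain ⟨x, hx, y, hy, h⟩ := hp
    cases h; exact ⟨hx, hy⟩
  have hPcard : P.card = 3 * C4.card := by
    rw [hPdef, card_biUnion]
    · rw [Finset.sum_congr rfl (fun v _ => ?_), Finset.sum_const, smul_eq_mul, mul_comm]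
      rw [card_image_of_injective _ (fun a b h => congrArg Prod.snd h),
        card_neighborFinset_eq_degree, hreg v]
    · intro v hv v' hv' hne
      simp only [Finset.disjoint_left, mem_image]
      rintro ⟨a, b⟩ ⟨x, hx, h⟩ ⟨y, hy, h'⟩
      cases h; cases h'; exact hne rfl
  have c4eq : ∀ v ∈ C4, ∀ v' ∈ C4, G.edist v v' ≤ 4 → v = v' := by
    intro v hv v' hv' hle
    by_contra hne
    have h5 := hC4 v hv v' hv' hne
    have : ((4 + 1 : ℕ) : ℕ∞) ≤ 4 := le_trans h5 hle
    norm_num at this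
  set T : Finset (Sym2 V ⊕ V) := L.image Sum.inl ∪ (Qf ∪ C2).image Sum.inr with hTdef
  have hcard : P.card ≤ T.card := by
    apply Finset.card_le_card_of_injOn (Fmap G C1 C2)
    · rintro ⟨v, u⟩ hp
      obtain ⟨hv, hu⟩ := hPmem _ hp
      simp only [Fmap, hTdef, mem_coe, mem_union, mem_image]
      by_cases h2 : u ∈ C2
      · rw [if_pos h2]; right; exact ⟨u, Or.inr h2, rfl⟩
      rw [if_neg h2]
      by_cases h1 : u ∈ C1
      · rw [if_pos h1]
        by_cases hn : ∃ w ∈ C2, G.Adj u w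
        · rw [dif_pos hn]; right
          exact ⟨hn.choose, Or.inr hn.choose_spec.1, rfl⟩
        · rw [dif_neg hn]; right; refine ⟨u, Or.inl ?_, rfl⟩
          rw [hQdef, mem_filter]
          push_neg at hn
          exact ⟨h1, hn⟩
      · rw [if_neg h1]; left
        refine ⟨s(v, u), ?_, rfl⟩
        rw [hLdef, mem_filter, mem_edgeFinset]
        refine ⟨hu, ?_⟩
        intro x hx
        rw [Sym2.mem_iff] at hx
        rcases hx with rfl | rfl
        · simp only [mem_union]; push_neg
          exact ⟨fun h => disjoint_left.mp h14 h hv, fun h => disjoint_left.mp h24 h hv⟩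
        · simp [mem_union, h1, h2]
    · rintro ⟨v, u⟩ hp ⟨v', u'⟩ hp' hF
      obtain ⟨hv, hu⟩ := hPmem _ (by simpa using hp)
      obtain ⟨hv', hu'⟩ := hPmem _ (by simpa using hp')
      simp only [Fmap] at hF
      by_cases h2 : u ∈ C2 <;> by_cases h2' : u' ∈ C2
      · -- B-B
        rw [if_pos h2, if_pos h2'] at hF
        obtain rfl : u = u' := by simpa using hF
        obtain rfl : v = v' := c4eq v hv v' hv'
          ((G.edist_le (Walk.cons hu (Walk.cons hu'.symm Walk.nil))).trans (by norm_num))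
        rfl
      · -- B vs (C/D/A)
        rw [if_pos h2, if_neg h2'] at hF
        by_cases h1' : u' ∈ C1
        · rw [if_pos h1'] at hF
          by_cases hn' : ∃ w ∈ C2, G.Adj u' w
          · rw [dif_pos hn'] at hF
            have hue : u = hn'.choose := by simpa using hF
            have hadj : G.Adj u' u := hue ▸ hn'.choose_spec.2
            obtain rfl : v = v' := c4eq v hv v' hv'
              ((G.edist_le (Walk.cons hu (Walk.cons hadj.symm (Walk.cons hu'.symm
                Walk.nil)))).trans (by norm_num))
            exact (no_tri G hg hu' hadj hu.symm).elim
          · rw [dif_neg hn'] at hF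
            obtain rfl : u = u' := by simpa using hF
            exact (disjoint_left.mp h12 h1' h2).elim
        · rw [if_neg h1'] at hF
          simp at hF
      · -- (C/D/A) vs B
        rw [if_neg h2, if_pos h2'] at hF
        by_cases h1 : u ∈ C1
        · rw [if_pos h1] at hF
          by_cases hn : ∃ w ∈ C2, G.Adj u w
          · rw [dif_pos hn] at hF
            have hue : u' = hn.choose := by simpa using hF.symm
            have hadj : G.Adj u u' := hue ▸ hn.choose_spec.2
            obtain rfl : v = v' := c4eq v hv v' hv'
              ((G.edist_le (Walk.cons hu (Walk.cons hadj (Walk.cons hu'.symm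
                Walk.nil)))).trans (by norm_num))
            exact (no_tri G hg hu hadj hu'.symm).elim
          · rw [dif_neg hn] at hF
            obtain rfl : u = u' := by simpa using hF
            exact (disjoint_left.mp h12 h1 h2').elim
        · rw [if_neg h1] at hF
          simp at hF
      · -- neither in C2
        rw [if_neg h2, if_neg h2'] at hF
        by_cases h1 : u ∈ C1 <;> by_cases h1' : u' ∈ C1
        · rw [if_pos h1, if_pos h1'] at hF
          by_cases hn : ∃ w ∈ C2, G.Adj u w <;> by_cases hn' : ∃ w ∈ C2, G.Adj u' w
          · -- D-D
            rw [dif_pos hn, dif_pos hn'] at hF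
            have hw : hn.choose = hn'.choose := by simpa using hF
            have hadj : G.Adj u hn.choose := hn.choose_spec.2
            have hadj' : G.Adj u' hn.choose := hw ▸ hn'.choose_spec.2
            obtain rfl : v = v' := c4eq v hv v' hv'
              ((G.edist_le (Walk.cons hu (Walk.cons hadj (Walk.cons hadj'.symm
                (Walk.cons hu'.symm Walk.nil))))).trans (by norm_num))
            by_cases huu : u = u'
            · rw [huu]
            · have hvw : v ≠ hn.choose :=
                fun h => disjoint_left.mp h24 (h ▸ hn.choose_spec.1) hv
              exact (no_sq G hg hu hadj hadj'.symm hu'.symm hvw huu).elim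
          · rw [dif_pos hn, dif_neg hn'] at hF
            have hue : u' = hn.choose := by simpa using hF.symm
            exact (h2' (hue ▸ hn.choose_spec.1)).elim
          · rw [dif_neg hn, dif_pos hn'] at hF
            have hue : u = hn'.choose := by simpa using hF
            exact (h2 (hue ▸ hn'.choose_spec.1)).elim
          · -- C-C
            rw [dif_neg hn, dif_neg hn'] at hF
            obtain rfl : u = u' := by simpa using hF
            obtain rfl : v = v' := c4eq v hv v' hv'
              ((G.edist_le (Walk.cons hu (Walk.cons hu'.symm Walk.nil))).trans (by norm_num))
            rfl
        · rw [if_pos h1, if_neg h1'] at hF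
          by_cases hn : ∃ w ∈ C2, G.Adj u w
          · rw [dif_pos hn] at hF; simp at hF
          · rw [dif_neg hn] at hF; simp at hF
        · rw [if_neg h1, if_pos h1'] at hF
          by_cases hn' : ∃ w ∈ C2, G.Adj u' w
          · rw [dif_pos hn'] at hF; simp at hF
          · rw [dif_neg hn'] at hF; simp at hF
        · -- A-A
          rw [if_neg h1, if_neg h1'] at hF
          rw [Sum.inl.injEq, Sym2.eq_iff] at hF
          rcases hF with ⟨rfl, rfl⟩ | ⟨h, h'⟩
          · rfl
          · subst h; subst h'
            have hvC4 : u ∈ C4 := hv'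
            have : v = u := c4eq v hv u hvC4
              ((G.edist_le (Walk.cons hu Walk.nil)).trans (by norm_num))
            exact (hu.ne this).elim
  have hTcard : T.card ≤ L.card + Qf.card + C2.card := by
    refine le_trans (card_union_le _ _) ?_
    have h1 : (L.image (Sum.inl : Sym2 V → Sym2 V ⊕ V)).card ≤ L.card := card_image_le
    have h2 : ((Qf ∪ C2).image (Sum.inr : V → Sym2 V ⊕ V)).card ≤ Qf.card + C2.card :=
      le_trans card_image_le (card_union_le _ _)
    omega
  omega
end
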